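/- Let m, n be coprime positive integers and let γ be an (m,n)-Dyck path. Then area(γ) = (m-1)(n-1)/2 - |O(γ)|, where area(γ) is the number of complete 1×1 lattice squares lying between γ and the diagonal line y = (n/m)x, and O(γ) is the set of pairs (r_h, r_v) where r_h is a horizontal step of γ, r_v is a vertical step of γ, and r_v appears after r_h in γ. -/

import Mathlib

open scoped Classical
open Finset

/-- A lattice path is encoded as a list of steps: `false` = horizontal step `(1,0)`,
`true` = vertical step `(0,1)`.  `IsDyck m n w` says `w` is an `(m,n)`-Dyck path:
it has `m` horizontal and `n` vertical steps and every intermediate lattice point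
`(x,y)` satisfies `n*x ≤ m*y` (the path stays weakly above the diagonal `y=(n/m)x`). -/
def IsDyck (m n : ℕ) (w : List Bool) : Prop :=
  w.count false = m ∧ w.count true = n ∧
    ∀ p ∈ w.inits, n * p.count false ≤ m * p.count true

/-- `x`-coordinate of the point of the path reached after the first `i` steps. -/
def ptX (w : List Bool) (i : ℕ) : ℤ := ((w.take i).count false : ℤ)

/-- `y`-coordinate of the point of the path reached after the first `i` steps. -/
def ptY (w : List Bool) (i : ℕ) : ℤ := ((w.take i).count true : ℤ)

/-- `O(γ)`: pairs `(i,j)` of a horizontal step `i` and a vertical step `j`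
appearing later in the path. -/
def Opairs (w : List Bool) : Finset (ℕ × ℕ) :=
  (Finset.range w.length ×ˢ Finset.range w.length).filter
    (fun ij => ij.1 < ij.2 ∧ w[ij.1]? = some false ∧ w[ij.2]? = some true)

/-- The set of (bottom-left corners of) complete unit lattice squares lying between the
path and the diagonal `y = (n/m)x`: the square `[x,x+1]×[y,y+1]` lies weakly above the
diagonal and strictly below the path. -/
noncomputable def areaSet (m n : ℕ) (w : List Bool) : Finset (ℕ × ℕ) :=
  ((Finset.range m) ×ˢ (Finset.range n)).filter (fun xy =>
    n * (xy.1 + 1) ≤ m * xy.2 ∧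
    ∃ i < w.length, w[i]? = some false ∧
      (w.take (i+1)).count false = xy.1 + 1 ∧ xy.2 + 1 ≤ (w.take (i+1)).count true)

/-- `area(γ)`: the number of complete unit lattice squares between the path and the
diagonal. -/
noncomputable def area (m n : ℕ) (w : List Bool) : ℕ := (areaSet m n w).card

/-- Some line of slope `n/m` (i.e. `{(x,y) | n*x - m*y = c}`) meets both the closed
horizontal step segment `i` and the closed vertical step segment `j`. -/
def MeetsBoth (m n : ℕ) (w : List Bool) (i j : ℕ) : Prop :=
  ∃ c : ℝ,
    (∃ x : ℝ, (ptX w i : ℝ) ≤ x ∧ x ≤ (ptX w i : ℝ) + 1 ∧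
      (n : ℝ) * x - (m : ℝ) * (ptY w i : ℝ) = c) ∧
    (∃ y : ℝ, (ptY w j : ℝ) ≤ y ∧ y ≤ (ptY w j : ℝ) + 1 ∧
      (n : ℝ) * (ptX w j : ℝ) - (m : ℝ) * y = c)

/-- Condition (1A): the line of slope `n/m` through the left endpoint `(a-1,b)` of the
horizontal step `i` meets the closed vertical step segment `j`. -/
def Cond1A (m n : ℕ) (w : List Bool) (i j : ℕ) : Prop :=
  ∃ y : ℝ, (ptY w j : ℝ) ≤ y ∧ y ≤ (ptY w j : ℝ) + 1 ∧
    (n : ℝ) * ((ptX w j : ℝ) - (ptX w i : ℝ)) = (m : ℝ) * (y - (ptY w i : ℝ))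

/-- Condition (2A): the line of slope `n/m` through the top endpoint `(a',b'+1)` of the
vertical step `j` meets the closed horizontal step segment `i`. -/
def Cond2A (m n : ℕ) (w : List Bool) (i j : ℕ) : Prop :=
  ∃ x : ℝ, (ptX w i : ℝ) ≤ x ∧ x ≤ (ptX w i : ℝ) + 1 ∧
    (n : ℝ) * (x - (ptX w j : ℝ)) = (m : ℝ) * ((ptY w i : ℝ) - ((ptY w j : ℝ) + 1))

/-- `H(γ)`: pairs in `O(γ)` admitting a common transversal line parallel to the
diagonal. -/
noncomputable def Hpairs (m n : ℕ) (w : List Bool) : Finset (ℕ × ℕ) :=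
  (Opairs w).filter (fun ij => MeetsBoth m n w ij.1 ij.2)

/-- `H₁(γ)`: pairs in `O(γ)` satisfying condition (1A). -/
noncomputable def H1pairs (m n : ℕ) (w : List Bool) : Finset (ℕ × ℕ) :=
  (Opairs w).filter (fun ij => Cond1A m n w ij.1 ij.2)

/-- `H₂(γ)`: pairs in `O(γ)` satisfying condition (2A). -/
noncomputable def H2pairs (m n : ℕ) (w : List Bool) : Finset (ℕ × ℕ) :=
  (Opairs w).filter (fun ij => Cond2A m n w ij.1 ij.2)

/-- The line of slope `n/m` through the point `(px,py)` meets the closed segment of the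
horizontal step `i`. -/
def lineHitsH (m n : ℕ) (w : List Bool) (px py : ℤ) (i : ℕ) : Prop :=
  w[i]? = some false ∧
    ∃ x : ℝ, (ptX w i : ℝ) ≤ x ∧ x ≤ (ptX w i : ℝ) + 1 ∧
      (n : ℝ) * (x - (px : ℝ)) = (m : ℝ) * ((ptY w i : ℝ) - (py : ℝ))

/-- The line of slope `n/m` through the point `(px,py)` meets the closed segment of the
vertical step `j`. -/
def lineHitsV (m n : ℕ) (w : List Bool) (px py : ℤ) (j : ℕ) : Prop :=
  w[j]? = some true ∧
    ∃ y : ℝ, (ptY w j : ℝ) ≤ y ∧ y ≤ (ptY w j : ℝ) + 1 ∧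
      (n : ℝ) * ((ptX w j : ℝ) - (px : ℝ)) = (m : ℝ) * (y - (py : ℝ))

/-- Outer vertices of the path, encoded by the index `j` of a vertical step that is
immediately followed by a horizontal step; the vertex itself is the point
`(ptX w (j+1), ptY w (j+1))`. -/
def outerIdx (w : List Bool) : Finset ℕ :=
  (Finset.range w.length).filter
    (fun j => w[j]? = some true ∧ w[(j+1)]? = some false)

/-- The perpendicular distance from the diagonal of the outer vertex indexed by `j`,
measured by `m*y - n*x` (proportional to the true distance). -/
def diagDist (m n : ℕ) (w : List Bool) (j : ℕ) : ℤ :=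
  (m : ℤ) * ptY w (j+1) - (n : ℤ) * ptX w (j+1)

/-- `V(γ)`: outer vertices other than one farthest from the diagonal. -/
def Vset (m n : ℕ) (w : List Bool) : Finset ℕ :=
  (outerIdx w).filter (fun j => ∃ j' ∈ outerIdx w, diagDist m n w j < diagDist m n w j')

/-- `k(p)`: the number of horizontal steps of the path, other than the horizontal step
starting at the outer vertex `p` (indexed by `j`), met by the line of slope `n/m`
through `p`. -/
noncomputable def kH (m n : ℕ) (w : List Bool) (j : ℕ) : ℕ :=
  ((Finset.range w.length).filter
    (fun i => i ≠ j + 1 ∧ lineHitsH m n w (ptX w (j+1)) (ptY w (j+1)) i)).card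

/-- The number of vertical steps of the path, other than the vertical step ending at the
outer vertex `p` (indexed by `j`), met by the line of slope `n/m` through `p`. -/
noncomputable def kV (m n : ℕ) (w : List Bool) (j : ℕ) : ℕ :=
  ((Finset.range w.length).filter
    (fun i => i ≠ j ∧ lineHitsV m n w (ptX w (j+1)) (ptY w (j+1)) i)).card

/-- `k₁(p)`: the number of vertical steps occurring after the outer vertex `p`
(indexed by `j`) met by the line of slope `n/m` through `p`. -/
noncomputable def k1 (m n : ℕ) (w : List Bool) (j : ℕ) : ℕ :=
  ((Finset.range w.length).filter
    (fun i => j < i ∧ lineHitsV m n w (ptX w (j+1)) (ptY w (j+1)) i)).card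

/-- `k₂(p)`: the number of horizontal steps occurring before the outer vertex `p`
(indexed by `j`) met by the line of slope `n/m` through `p`. -/
noncomputable def k2 (m n : ℕ) (w : List Bool) (j : ℕ) : ℕ :=
  ((Finset.range w.length).filter
    (fun i => i ≤ j ∧ lineHitsH m n w (ptX w (j+1)) (ptY w (j+1)) i)).card

/-- The insertion map `γ ↦ γ*`: insert one horizontal step immediately after each
vertical step. -/
def star : List Bool → List Bool
  | [] => []
  | true :: w => true :: false :: star w
  | false :: w => false :: star w

/-- The index in `γ*` of the step corresponding to the step of index `i` in `γ`. -/
def starIdx (w : List Bool) (i : ℕ) : ℕ := i + (w.take i).count true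

/-- A Dyck path is rugged if every vertical step is immediately followed by a
horizontal step. -/
def Rugged (w : List Bool) : Prop :=
  ∀ i, w[i]? = some true → w[(i+1)]? = some false

section Helpers

lemma sum_ite_count (w : List Bool) (c : Bool) :
    (∑ j ∈ Finset.range w.length, if w[j]? = some c then 1 else 0) = w.count c := by
  induction w with
  | nil => simp
  | cons a l ih =>
    rw [List.length_cons, Finset.sum_range_succ']
    simp only [List.getElem?_cons_succ, List.getElem?_cons_zero]
    rw [ih, List.count_cons]
    by_cases h : a = c <;> simp [h]

lemma card_filter_count (w : List Bool) (c : Bool) :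
    ((Finset.range w.length).filter (fun j => w[j]? = some c)).card = w.count c := by
  rw [Finset.card_filter, sum_ite_count]

lemma take_succ_of_get {w : List Bool} {i : ℕ} {b : Bool} (hi : w[i]? = some b) :
    w.take (i+1) = w.take i ++ [b] := by
  rw [List.take_succ, hi]
  rfl

lemma count_take_mono {w : List Bool} (c : Bool) {i j : ℕ} (h : i ≤ j) :
    (w.take i).count c ≤ (w.take j).count c := by
  have h1 : (w.take i) = (w.take j).take i := by
    rw [List.take_take, min_eq_left h]
  rw [h1]
  exact List.Sublist.count_le c (List.take_sublist _ _)

lemma count_take_le {w : List Bool} (c : Bool) (i : ℕ) :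
    (w.take i).count c ≤ w.count c :=
  List.Sublist.count_le c (List.take_sublist _ _)

lemma count_lt_of_false {w : List Bool} {i i' : ℕ} (h : i < i')
    (hi' : w[i']? = some false) :
    (w.take (i+1)).count false < (w.take (i'+1)).count false := by
  have h1 : (w.take (i+1)).count false ≤ (w.take i').count false :=
    count_take_mono _ h
  rw [take_succ_of_get hi', List.count_append]
  simp
  omega

lemma cF_pos {w : List Bool} {i : ℕ} (hi : w[i]? = some false) :
    1 ≤ (w.take (i+1)).count false := by
  rw [take_succ_of_get hi, List.count_append]
  simp

lemma ceil_div_le {m : ℕ} (hm : 0 < m) (c y : ℕ) : (c + m - 1) / m ≤ y ↔ c ≤ m * y := by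
  constructor
  · intro h
    have h2 : ¬ (y + 1 ≤ (c + m - 1) / m) := by omega
    rw [Nat.le_div_iff_mul_le hm] at h2
    have : (y+1)*m = m*y + m := by ring
    omega
  · intro h
    by_contra h2
    push_neg at h2
    have h3 : y + 1 ≤ (c + m - 1) / m := h2
    rw [Nat.le_div_iff_mul_le hm] at h3
    have : (y+1)*m = m*y + m := by ring
    omega

lemma ceil_eq {m c : ℕ} (hm : 0 < m) (hnd : ¬ m ∣ c) : (c + m - 1) / m = c / m + 1 := by
  have hmod := Nat.div_add_mod c m
  have hr : c % m ≠ 0 := fun h => hnd (Nat.dvd_of_mod_eq_zero h)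
  have hrm : c % m < m := Nat.mod_lt _ hm
  have key : c + m - 1 = m * (c / m + 1) + (c % m - 1) := by
    have : m * (c / m + 1) = m * (c / m) + m := by ring
    omega
  rw [key, Nat.mul_add_div hm]
  have h0 : (c % m - 1) / m = 0 := Nat.div_eq_of_lt (by omega)
  omega

lemma exists_false_idx {w : List Bool} {m : ℕ} (hcount : w.count false = m)
    {k : ℕ} (hk1 : 1 ≤ k) (hkm : k ≤ m) :
    ∃ i < w.length, w[i]? = some false ∧ (w.take (i+1)).count false = k := by
  classical
  have hex : ∃ j, k ≤ (w.take j).count false :=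
    ⟨w.length, by rw [List.take_length, hcount]; exact hkm⟩
  have hj : k ≤ (w.take (Nat.find hex)).count false := Nat.find_spec hex
  have hj0 : Nat.find hex ≠ 0 := by
    intro h
    rw [h] at hj
    simp at hj
    omega
  obtain ⟨i, hji⟩ : ∃ i, Nat.find hex = i + 1 := ⟨Nat.find hex - 1, by omega⟩
  rw [hji] at hj
  have hmin : ¬ k ≤ (w.take i).count false := Nat.find_min hex (by omega)
  push_neg at hmin
  have hilen : i < w.length := by
    by_contra h
    push_neg at h
    rw [List.take_of_length_le h, hcount] at hmin
    omega
  obtain ⟨b, hb⟩ : ∃ b, w[i]? = some b := by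
    cases h : w[i]? with
    | none => rw [List.getElem?_eq_none_iff] at h; omega
    | some b => exact ⟨b, rfl⟩
  have ht : w.take (i+1) = w.take i ++ [b] := by
    rw [List.take_succ, hb]; rfl
  rw [ht, List.count_append] at hj
  cases b with
  | true => simp at hj; omega
  | false =>
    refine ⟨i, hilen, hb, ?_⟩
    rw [ht, List.count_append]
    simp at hj ⊢
    omega

lemma div_pair {m n : ℕ} (hm : 0 < m) (hn : 0 < n) (h : Nat.Coprime m n)
    {a : ℕ} (ha1 : 1 ≤ a) (ham : a < m) :
    n * a / m + n * (m - a) / m = n - 1 := by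
  have hnd : ¬ m ∣ n * a := by
    intro hdvd
    have h2 : m ∣ a := h.dvd_of_dvd_mul_left hdvd
    have := Nat.le_of_dvd (by omega) h2
    omega
  have hr : n * a % m ≠ 0 := fun h2 => hnd (Nat.dvd_of_mod_eq_zero h2)
  have hmod := Nat.div_add_mod (n * a) m
  have hrm : n * a % m < m := Nat.mod_lt _ hm
  have hdn : n * a / m < n := by
    rw [Nat.div_lt_iff_lt_mul hm]
    calc n * a < n * m := (Nat.mul_lt_mul_left hn).mpr ham
    _ = m * n := Nat.mul_comm n m
    _ ≤ n * m := le_of_eq (Nat.mul_comm m n)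
  have h1 : n * (m - a) + n * a = n * m := by
    rw [← Nat.mul_add]
    congr 1
    omega
  have key : n * (m - a) = m * (n - n * a / m - 1) + (m - n * a % m) := by
    have h2 : m * (n - n * a / m - 1) + m * (n * a / m) + m = m * n := by
      have h3 : m * ((n - n * a / m - 1) + (n * a / m + 1)) = m * n := by
        congr 1
        omega
      have h4 : m * ((n - n * a / m - 1) + (n * a / m + 1))
          = m * (n - n * a / m - 1) + m * (n * a / m) + m := by ring
      omega
    have h5 : n * m = m * n := Nat.mul_comm n m
    omega
  rw [key, Nat.mul_add_div hm]
  have h0 : (m - n * a % m) / m = 0 := Nat.div_eq_of_lt (by omega)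
  omega

lemma gauss {m n : ℕ} (hm : 0 < m) (hn : 0 < n) (h : Nat.Coprime m n) :
    2 * (∑ x ∈ range (m-1), n*(x+1)/m) = (m-1)*(n-1) := by
  have hrefl := Finset.sum_range_reflect (fun x => n*(x+1)/m) (m-1)
  have hpair : ∀ x ∈ range (m-1),
      n*((m-1) - 1 - x + 1)/m + n*(x+1)/m = n - 1 := by
    intro x hx
    rw [mem_range] at hx
    have e1 : (m-1) - 1 - x + 1 = m - (x+1) := by omega
    rw [e1, Nat.add_comm]
    exact div_pair hm hn h (by omega) (by omega)
  calc 2 * (∑ x ∈ range (m-1), n*(x+1)/m)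
      = (∑ x ∈ range (m-1), n*((m-1) - 1 - x + 1)/m) + (∑ x ∈ range (m-1), n*(x+1)/m) := by
        rw [hrefl]; ring
    _ = ∑ x ∈ range (m-1), (n*((m-1) - 1 - x + 1)/m + n*(x+1)/m) := Finset.sum_add_distrib.symm
    _ = ∑ x ∈ range (m-1), (n - 1) := Finset.sum_congr rfl hpair
    _ = (m-1)*(n-1) := by rw [Finset.sum_const, card_range, smul_eq_mul]

lemma qsum {m n : ℕ} (hm : 0 < m) (hn : 0 < n) (h : Nat.Coprime m n) :
    2 * (∑ x ∈ range m, (n*(x+1) + m - 1)/m) = (m-1)*(n-1) + 2*(m-1) + 2*n := by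
  obtain ⟨m', rfl⟩ : ∃ m', m = m' + 1 := ⟨m - 1, by omega⟩
  rw [Finset.sum_range_succ]
  have hlast : (n*(m'+1) + (m'+1) - 1)/(m'+1) = n := by
    have e : n*(m'+1) + (m'+1) - 1 = (m'+1)*n + m' := by
      have : n * (m'+1) = (m'+1) * n := Nat.mul_comm _ _
      omega
    rw [e, Nat.mul_add_div hm, Nat.div_eq_of_lt (by omega : m' < m'+1)]
    omega
  have hterm : ∀ x ∈ range m', (n*(x+1) + (m'+1) - 1)/(m'+1) = n*(x+1)/(m'+1) + 1 := by
    intro x hx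
    rw [mem_range] at hx
    apply ceil_eq hm
    intro hdvd
    have h2 : (m'+1) ∣ (x+1) := h.dvd_of_dvd_mul_left hdvd
    have := Nat.le_of_dvd (by omega) h2
    omega
  rw [Finset.sum_congr rfl hterm, Finset.sum_add_distrib, Finset.sum_const, card_range,
    smul_eq_mul, hlast]
  have hg := gauss hm hn h
  simp only [Nat.add_sub_cancel] at hg ⊢
  omega

lemma dyck_take {m n : ℕ} {w : List Bool} (hw : IsDyck m n w) (j : ℕ) :
    n * (w.take j).count false ≤ m * (w.take j).count true :=
  hw.2.2 _ ((List.mem_inits _ _).mpr (List.take_prefix _ _))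

lemma area_eq {m n : ℕ} {w : List Bool} (hm : 0 < m) (hw : IsDyck m n w) :
    area m n w = ∑ i ∈ (range w.length).filter (fun i => w[i]? = some false),
      ((w.take (i+1)).count true - (n * (w.take (i+1)).count false + m - 1) / m) := by
  classical
  have hcard : (areaSet m n w).card =
      ((range w.length ×ˢ range n).filter (fun iy =>
        w[iy.1]? = some false ∧ n * (w.take (iy.1+1)).count false ≤ m * iy.2 ∧
          iy.2 + 1 ≤ (w.take (iy.1+1)).count true)).card := by
    symm
    apply Finset.card_bij (fun iy _ => ((w.take (iy.1+1)).count false - 1, iy.2))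
    · rintro ⟨i, y⟩ hiy
      simp only [mem_filter, mem_product, mem_range] at hiy
      obtain ⟨⟨hi, hy⟩, hif, hle, hcnt⟩ := hiy
      have h1 : 1 ≤ (w.take (i+1)).count false := cF_pos hif
      have h2 : (w.take (i+1)).count false ≤ m := by
        have := count_take_le (w := w) false (i+1)
        rw [hw.1] at this; exact this
      simp only [areaSet, mem_filter, mem_product, mem_range]
      refine ⟨⟨by omega, hy⟩, ?_, i, hi, hif, by omega, hcnt⟩
      have e : (w.take (i+1)).count false - 1 + 1 = (w.take (i+1)).count false := by omega
      rw [e]; exact hle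
    · rintro ⟨i, y⟩ hiy ⟨i', y'⟩ hiy' heq
      simp only [mem_filter, mem_product, mem_range] at hiy hiy'
      simp only [Prod.mk.injEq] at heq
      obtain ⟨heq1, rfl⟩ := heq
      have h1 : 1 ≤ (w.take (i+1)).count false := cF_pos hiy.2.1
      have h1' : 1 ≤ (w.take (i'+1)).count false := cF_pos hiy'.2.1
      have heqc : (w.take (i+1)).count false = (w.take (i'+1)).count false := by omega
      have hii : i = i' := by
        by_contra hne
        rcases Nat.lt_or_ge i i' with hlt | hge
        · have := count_lt_of_false hlt hiy'.2.1; omega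
        · have hlt : i' < i := by omega
          have := count_lt_of_false hlt hiy.2.1; omega
      simp [hii]
    · rintro ⟨x, y⟩ hxy
      simp only [areaSet, mem_filter, mem_product, mem_range] at hxy
      obtain ⟨⟨hx, hy⟩, hle, i, hi, hif, hcf, hcnt⟩ := hxy
      refine ⟨(i, y), ?_, ?_⟩
      · simp only [mem_filter, mem_product, mem_range]
        exact ⟨⟨hi, hy⟩, hif, by rw [hcf]; exact hle, hcnt⟩
      · simp [hcf]
  rw [area, hcard, Finset.card_filter, Finset.sum_product, Finset.sum_filter]
  apply Finset.sum_congr rfl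
  intro i hi
  rw [mem_range] at hi
  by_cases hif : w[i]? = some false
  · simp only [hif, true_and, if_true]
    rw [← Finset.card_filter]
    have hb : (w.take (i+1)).count true ≤ n := by
      have := count_take_le (w := w) true (i+1)
      rw [hw.2.1] at this; exact this
    have hdy := dyck_take hw (i+1)
    have hql : (n * (w.take (i+1)).count false + m - 1) / m ≤ (w.take (i+1)).count true :=
      (ceil_div_le hm _ _).mpr hdy
    have hset : (range n).filter (fun y => n * (w.take (i+1)).count false ≤ m * y ∧
        y + 1 ≤ (w.take (i+1)).count true)
        = Finset.Ico ((n * (w.take (i+1)).count false + m - 1) / m) ((w.take (i+1)).count true) := by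
      ext y
      simp only [mem_filter, mem_range, mem_Ico]
      rw [← ceil_div_le hm]
      omega
    rw [hset, Nat.card_Ico]
  · simp [hif]

lemma opairs_eq {n : ℕ} {w : List Bool} (hwn : w.count true = n) :
    (Opairs w).card = ∑ i ∈ (range w.length).filter (fun i => w[i]? = some false),
      (n - (w.take (i+1)).count true) := by
  classical
  rw [Opairs, Finset.card_filter, Finset.sum_product, Finset.sum_filter]
  apply Finset.sum_congr rfl
  intro i hi
  rw [mem_range] at hi
  by_cases hif : w[i]? = some false
  · simp only [hif, eq_self_iff_true, true_and, if_true]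
    rw [← Finset.card_filter]
    have htot : ((range w.length).filter (fun j => w[j]? = some true)).card = n := by
      rw [card_filter_count, hwn]
    have hsplit := Finset.card_filter_add_card_filter_not
      (s := (range w.length).filter (fun j => w[j]? = some true)) (p := fun j => j ≤ i)
    have hle : (((range w.length).filter (fun j => w[j]? = some true)).filter
        (fun j => j ≤ i)).card = (w.take (i+1)).count true := by
      rw [Finset.filter_filter]
      have h1 : (range w.length).filter (fun j => w[j]? = some true ∧ j ≤ i)
          = (range (w.take (i+1)).length).filter
              (fun j => (w.take (i+1))[j]? = some true) := by
        ext j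
        simp only [mem_filter, mem_range, List.length_take]
        constructor
        · rintro ⟨hj, hjt, hji⟩
          refine ⟨by omega, ?_⟩
          rw [List.getElem?_take_of_lt (by omega)]
          exact hjt
        · rintro ⟨hj, hjt⟩
          have hj' : j < i + 1 := by omega
          rw [List.getElem?_take_of_lt hj'] at hjt
          exact ⟨by omega, hjt, by omega⟩
      rw [h1, card_filter_count]
    have heq : (range w.length).filter (fun j => i < j ∧ w[j]? = some true)
        = ((range w.length).filter (fun j => w[j]? = some true)).filter
            (fun j => ¬ j ≤ i) := by
      rw [Finset.filter_filter]
      ext j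
      simp only [mem_filter, mem_range, not_le]
      tauto
    have hct : (w.take (i+1)).count true ≤ n := by
      have := count_take_le (w := w) true (i+1)
      omega
    rw [heq]
    omega
  · simp [hif]

lemma qsum_transport {m n : ℕ} {w : List Bool} (hw1 : w.count false = m) :
    ∑ i ∈ (range w.length).filter (fun i => w[i]? = some false),
        (n * (w.take (i+1)).count false + m - 1) / m
      = ∑ x ∈ range m, (n * (x+1) + m - 1) / m := by
  apply Finset.sum_bij (fun i _ => (w.take (i+1)).count false - 1)
  · intro i hi
    rw [mem_filter, mem_range] at hi
    have h1 := cF_pos hi.2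
    have h2 : (w.take (i+1)).count false ≤ m := by
      have := count_take_le (w := w) false (i+1); omega
    rw [mem_range]; omega
  · intro i hi i' hi' heq
    rw [mem_filter] at hi hi'
    have h1 := cF_pos hi.2
    have h1' := cF_pos hi'.2
    have heqc : (w.take (i+1)).count false = (w.take (i'+1)).count false := by omega
    by_contra hne
    rcases Nat.lt_or_ge i i' with hlt | hge
    · have := count_lt_of_false hlt hi'.2; omega
    · have hlt : i' < i := by omega
      have := count_lt_of_false hlt hi.2; omega
  · intro x hx
    rw [mem_range] at hx
    obtain ⟨i, hilen, hif, hcf⟩ := exists_false_idx hw1 (k := x+1) (by omega) (by omega)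
    exact ⟨i, by rw [mem_filter, mem_range]; exact ⟨hilen, hif⟩, by rw [hcf]; omega⟩
  · intro i hi
    rw [mem_filter] at hi
    have h1 := cF_pos hi.2
    have e : (w.take (i+1)).count false - 1 + 1 = (w.take (i+1)).count false := by omega
    rw [e]

end Helpers

/-- `area(γ) = (m-1)(n-1)/2 - |O(γ)|`. -/
theorem statement1 (m n : ℕ) (hm : 0 < m) (hn : 0 < n) (h : Nat.Coprime m n)
    (w : List Bool) (hw : IsDyck m n w) :
    (area m n w : ℚ) = ((m : ℚ) - 1) * ((n : ℚ) - 1) / 2 - ((Opairs w).card : ℚ) := by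
  classical
  set H := (range w.length).filter (fun i => w[i]? = some false) with hH
  have hHcard : H.card = m := by rw [hH, card_filter_count, hw.1]
  have hct : ∀ i ∈ H, (w.take (i+1)).count true ≤ n := by
    intro i _
    have := count_take_le (w := w) true (i+1)
    rw [hw.2.1] at this
    exact this
  have hql : ∀ i ∈ H, (n * (w.take (i+1)).count false + m - 1)/m ≤ (w.take (i+1)).count true :=
    fun i _ => (ceil_div_le hm _ _).mpr (dyck_take hw (i+1))
  have hAq : (area m n w : ℚ) = (∑ i ∈ H, ((w.take (i+1)).count true : ℚ))
      - ∑ i ∈ H, (((n * (w.take (i+1)).count false + m - 1)/m : ℕ) : ℚ) := by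
    rw [area_eq hm hw, Nat.cast_sum, ← Finset.sum_sub_distrib]
    exact Finset.sum_congr rfl fun i hi => by rw [Nat.cast_sub (hql i hi)]
  have hBq : ((Opairs w).card : ℚ) = m * n - ∑ i ∈ H, ((w.take (i+1)).count true : ℚ) := by
    rw [opairs_eq hw.2.1, Nat.cast_sum]
    have h1 : ∀ i ∈ H, ((n - (w.take (i+1)).count true : ℕ) : ℚ)
        = (n : ℚ) - (w.take (i+1)).count true :=
      fun i hi => by rw [Nat.cast_sub (hct i hi)]
    rw [Finset.sum_congr rfl h1, Finset.sum_sub_distrib, Finset.sum_const, hHcard]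
    push_cast
    ring
  have hCq : (∑ i ∈ H, (((n * (w.take (i+1)).count false + m - 1)/m : ℕ) : ℚ))
      = ((m:ℚ)-1)*((n:ℚ)-1)/2 + ((m:ℚ)-1) + n := by
    rw [← Nat.cast_sum, qsum_transport hw.1]
    have hcast := congrArg (fun t : ℕ => (t : ℚ)) (qsum hm hn h)
    simp only [Nat.cast_mul, Nat.cast_add, Nat.cast_ofNat] at hcast
    rw [Nat.cast_sub (by omega : 1 ≤ m), Nat.cast_sub (by omega : 1 ≤ n)] at hcast
    push_cast at hcast
    rw [Nat.cast_sum]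
    linarith
  have hring : ((m:ℚ)-1)*((n:ℚ)-1) = (m:ℚ)*(n:ℚ) - m - n + 1 := by ring
  rw [hAq, hBq]
  linarith [hCq]
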